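/- Every normalized block sequence (y_n) of (e_i) dominates (e_n) with constant 1: for all finitely supported real scalars (α_i), ‖Σ_i α_i y_i‖ ≥ ‖Σ_i α_i e_i‖. -/

import Mathlib

abbrev c00 : Type := ℕ →₀ ℝ

noncomputable def flog (x : ℝ) : ℝ := Real.logb 2 (x + 1)

noncomputable def supNorm (x : c00) : ℝ := ⨆ i, |x i|

def proj (E : Finset ℕ) (x : c00) : c00 := x.filter (· ∈ E)

def FLt (A B : Finset ℕ) : Prop := ∀ a ∈ A, ∀ b ∈ B, a < b

def IsNormC00 (N : c00 → ℝ) : Prop :=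
  (∀ x, N x = 0 ↔ x = 0) ∧ (∀ x y, N (x + y) ≤ N x + N y) ∧
    ∀ (a : ℝ) (x : c00), N (a • x) = |a| * N x

def schSet (N : c00 → ℝ) (x : c00) : Set ℝ :=
  {s | ∃ n : ℕ, 2 ≤ n ∧ ∃ E : Fin n → Finset ℕ,
    (∀ i j : Fin n, i < j → FLt (E i) (E j)) ∧
    s = (flog n)⁻¹ * ∑ i, N (proj (E i) x)}

def IsSchlumprechtNorm (N : c00 → ℝ) : Prop :=
  IsNormC00 N ∧ ∀ x : c00, IsLUB (insert (supNorm x) (schSet N x)) (N x)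

def IsBlockSeq (x : ℕ → c00) : Prop :=
  (∀ n, x n ≠ 0) ∧ ∀ n, ∀ i ∈ (x n).support, ∀ j ∈ (x (n+1)).support, i < j

def SeqEquiv (N : c00 → ℝ) (u v : ℕ → c00) : Prop :=
  ∃ c : ℝ, 1 ≤ c ∧ ∀ a : ℕ →₀ ℝ,
    (1 / c) * N (a.sum fun i t => t • u i) ≤ N (a.sum fun i t => t • v i) ∧
    N (a.sum fun i t => t • v i) ≤ c * N (a.sum fun i t => t • u i)

/- ## Auxiliary lemmas -/

section Aux

lemma N_zero {N : c00 → ℝ} (hN : IsNormC00 N) : N 0 = 0 := (hN.1 0).mpr rfl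

lemma N_neg {N : c00 → ℝ} (hN : IsNormC00 N) (x : c00) : N (-x) = N x := by
  have h := hN.2.2 (-1) x
  simpa using h

lemma N_nonneg {N : c00 → ℝ} (hN : IsNormC00 N) (x : c00) : 0 ≤ N x := by
  have h1 : N (x + (-x)) ≤ N x + N (-x) := hN.2.1 x (-x)
  rw [add_neg_cancel, N_zero hN, N_neg hN] at h1
  linarith

lemma proj_apply (E : Finset ℕ) (x : c00) (i : ℕ) :
    proj E x i = if i ∈ E then x i else 0 := rfl

lemma proj_eq_self {E : Finset ℕ} {x : c00} (h : ∀ i ∈ x.support, i ∈ E) :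
    proj E x = x := by
  ext i
  rw [proj_apply]
  split_ifs with hi
  · rfl
  · by_contra hne
    exact hi (h i (Finsupp.mem_support_iff.mpr fun h0 => hne h0.symm))

lemma proj_eq_zero {E : Finset ℕ} {x : c00} (h : ∀ i ∈ x.support, i ∉ E) :
    proj E x = 0 := by
  ext i
  rw [proj_apply]
  split_ifs with hi
  · by_contra hne
    exact h i (Finsupp.mem_support_iff.mpr fun h0 => hne (h0.trans rfl)) hi
  · rfl

lemma proj_proj (E F : Finset ℕ) (x : c00) :
    proj E (proj F x) = proj (E ∩ F) x := by
  ext i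
  simp only [proj_apply, Finset.mem_inter]
  by_cases h1 : i ∈ E <;> by_cases h2 : i ∈ F <;> simp [h1, h2]

lemma proj_smul (E : Finset ℕ) (t : ℝ) (x : c00) :
    proj E (t • x) = t • proj E x := by
  ext i
  simp only [proj_apply, Finsupp.smul_apply]
  split_ifs <;> simp

lemma proj_finsuppSum (E : Finset ℕ) (a : ℕ →₀ ℝ) (g : ℕ → ℝ → c00) :
    proj E (a.sum g) = ∑ j ∈ a.support, proj E (g j (a j)) := by
  classical
  rw [Finsupp.sum]
  induction a.support using Finset.induction with
  | empty => simp [proj, Finsupp.filter_zero]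
  | @insert x s hx ih =>
    rw [Finset.sum_insert hx, Finset.sum_insert hx, ← ih]
    show Finsupp.filter _ _ = _
    rw [Finsupp.filter_add]
    rfl

lemma abs_le_sum_abs (x : c00) (i : ℕ) : |x i| ≤ ∑ j ∈ x.support, |x j| := by
  by_cases h : i ∈ x.support
  · exact Finset.single_le_sum (f := fun j => |x j|) (fun j _ => abs_nonneg _) h
  · rw [Finsupp.notMem_support_iff.mp h, abs_zero]
    exact Finset.sum_nonneg fun j _ => abs_nonneg _

lemma abs_le_supNorm (x : c00) (i : ℕ) : |x i| ≤ supNorm x :=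
  le_ciSup ⟨∑ j ∈ x.support, |x j|, by rintro r ⟨i, rfl⟩; exact abs_le_sum_abs x i⟩ i

lemma supNorm_le (x : c00) {c : ℝ} (h : ∀ i, |x i| ≤ c) : supNorm x ≤ c :=
  ciSup_le h

lemma supNorm_le_N {N : c00 → ℝ} (hN : IsSchlumprechtNorm N) (x : c00) :
    supNorm x ≤ N x := (hN.2 x).1 (Set.mem_insert _ _)

lemma schSet_le_N {N : c00 → ℝ} (hN : IsSchlumprechtNorm N) {x : c00} {s : ℝ}
    (hs : s ∈ schSet N x) : s ≤ N x := (hN.2 x).1 (Set.mem_insert_of_mem _ hs)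

lemma N_le_of_ub {N : c00 → ℝ} (hN : IsSchlumprechtNorm N) {x : c00} {c : ℝ}
    (h1 : supNorm x ≤ c) (h2 : ∀ s ∈ schSet N x, s ≤ c) : N x ≤ c := by
  refine (hN.2 x).2 ?_
  rintro s (rfl | hs)
  · exact h1
  · exact h2 s hs

lemma flog_two_pos : (0 : ℝ) < flog 2 := by
  unfold flog
  refine Real.logb_pos (by norm_num) (by norm_num)

lemma one_lt_flog_two : (1 : ℝ) < flog 2 := by
  unfold flog
  have h2 : Real.logb 2 2 = 1 := Real.logb_self_eq_one (by norm_num)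
  calc (1 : ℝ) = Real.logb 2 2 := h2.symm
    _ < Real.logb 2 (2 + 1) := Real.logb_lt_logb (by norm_num) (by norm_num) (by norm_num)

lemma flog_two_le {n : ℕ} (hn : 2 ≤ n) : flog 2 ≤ flog n := by
  unfold flog
  refine Real.logb_le_logb_of_le (by norm_num) (by norm_num) ?_
  have : (2 : ℝ) ≤ (n : ℝ) := by exact_mod_cast hn
  linarith

lemma flog_n_pos {n : ℕ} (hn : 2 ≤ n) : (0 : ℝ) < flog n :=
  flog_two_pos.trans_le (flog_two_le hn)

/-- Contractivity of coordinate projections for a Schlumprecht norm. -/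
lemma N_proj_le {N : c00 → ℝ} (hN : IsSchlumprechtNorm N) (E : Finset ℕ) (x : c00) :
    N (proj E x) ≤ N x := by
  refine N_le_of_ub hN ?_ ?_
  · refine le_trans (supNorm_le _ fun i => ?_) (supNorm_le_N hN x)
    rw [proj_apply]
    split_ifs
    · exact abs_le_supNorm x i
    · rw [abs_zero]
      exact abs_nonneg _ |>.trans (abs_le_supNorm x i)
  · rintro s ⟨n, hn, F, hF, rfl⟩
    refine schSet_le_N hN ⟨n, hn, fun i => F i ∩ E, ?_, ?_⟩
    · intro i j hij p hp q hq
      exact hF i j hij p (Finset.mem_inter.mp hp).1 q (Finset.mem_inter.mp hq).1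
    · congr 1
      refine Finset.sum_congr rfl fun i _ => ?_
      rw [proj_proj]

/-- Supports of distinct blocks are "ordered": all indices of `y m` are below
those of `y n` when `m < n`. -/
lemma block_lt {y : ℕ → c00} (hy : IsBlockSeq y) {m n : ℕ} (h : m < n) :
    ∀ i ∈ (y m).support, ∀ j ∈ (y n).support, i < j := by
  induction n, h using Nat.le_induction with
  | base => exact hy.2 m
  | succ n hmn ih =>
    intro i hi j hj
    obtain ⟨c, hc⟩ := Finsupp.support_nonempty_iff.mpr (hy.1 n)
    exact (ih i hi c hc).trans (hy.2 n c hc j hj)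

lemma block_disjoint {y : ℕ → c00} (hy : IsBlockSeq y) {m n : ℕ} (h : m ≠ n)
    {i : ℕ} (hi : i ∈ (y m).support) : i ∉ (y n).support := by
  intro hj
  rcases h.lt_or_gt with hlt | hlt
  · exact lt_irrefl i (block_lt hy hlt i hi i hj)
  · exact lt_irrefl i (block_lt hy hlt i hj i hi)

lemma proj_support_block {y : ℕ → c00} (hy : IsBlockSeq y) (a : ℕ →₀ ℝ) (i : ℕ) :
    proj ((y i).support) (a.sum fun j t => t • y j) = a i • y i := by
  classical
  rw [proj_finsuppSum]
  by_cases hi : i ∈ a.support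
  · rw [Finset.sum_eq_single_of_mem i hi]
    · rw [proj_smul]
      congr 1
      exact proj_eq_self fun p hp => hp
    · intro j _ hji
      rw [proj_smul, proj_eq_zero fun p hp => block_disjoint hy hji hp, smul_zero]
  · rw [Finsupp.notMem_support_iff.mp hi, zero_smul]
    refine Finset.sum_eq_zero fun j hj => ?_
    have hji : j ≠ i := fun h => hi (h ▸ hj)
    rw [proj_smul, proj_eq_zero fun p hp => block_disjoint hy hji hp, smul_zero]

lemma proj_biUnion_block {y : ℕ → c00} (hy : IsBlockSeq y) (a : ℕ →₀ ℝ) (E : Finset ℕ) :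
    proj (E.biUnion fun k => (y k).support) (a.sum fun j t => t • y j)
      = (proj E a).sum fun j t => t • y j := by
  classical
  rw [proj_finsuppSum]
  have hsupp : (proj E a).support = a.support.filter (· ∈ E) := rfl
  rw [Finsupp.sum, hsupp, Finset.sum_filter]
  refine Finset.sum_congr rfl fun j hj => ?_
  by_cases hjE : j ∈ E
  · rw [if_pos hjE]
    have hval : proj E a j = a j := by rw [proj_apply, if_pos hjE]
    rw [hval, proj_smul]
    congr 1
    refine proj_eq_self fun p hp => Finset.mem_biUnion.mpr ⟨j, hjE, hp⟩
  · rw [if_neg hjE, proj_smul, proj_eq_zero, smul_zero]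
    intro p hp hpF
    obtain ⟨k, hkE, hpk⟩ := Finset.mem_biUnion.mp hpF
    have hkj : j ≠ k := fun h => hjE (h ▸ hkE)
    exact block_disjoint hy hkj hp hpk

/-- Main inductive lemma: strong induction on the cardinality of the support. -/
lemma N_le_N_blockSum {N : c00 → ℝ} (hN : IsSchlumprechtNorm N)
    {y : ℕ → c00} (hy : IsBlockSeq y) (hyn : ∀ n, N (y n) = 1) :
    ∀ k (a : ℕ →₀ ℝ), a.support.card ≤ k →
      N a ≤ N (a.sum fun i t => t • y i) := by
  intro k
  induction k with
  | zero =>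
    intro a ha
    have h0 : a = 0 := by
      rw [← Finsupp.support_eq_empty, ← Finset.card_eq_zero]
      omega
    subst h0
    simp only [Finsupp.sum_zero_index, le_refl]
  | succ k ih =>
    intro a ha
    set Y : c00 := a.sum fun i t => t • y i with hYdef
    have hNY : 0 ≤ N Y := N_nonneg hN.1 Y
    have hNa : 0 ≤ N a := N_nonneg hN.1 a
    -- Every element of the defining set is at most `max (N Y) ((flog 2)⁻¹ * N a)`.
    have key : N a ≤ max (N Y) ((flog 2)⁻¹ * N a) := by
      refine N_le_of_ub hN ?_ ?_
      · -- supNorm bound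
        refine le_max_of_le_left (supNorm_le _ fun i => ?_)
        calc |a i| = |a i| * N (y i) := by rw [hyn i, mul_one]
          _ = N (a i • y i) := (hN.1.2.2 _ _).symm
          _ = N (proj ((y i).support) Y) := by rw [proj_support_block hy]
          _ ≤ N Y := N_proj_le hN _ _
      · rintro s ⟨n, hn, E, hE, rfl⟩
        by_cases hcase : ∃ i₀ : Fin n, ∀ p ∈ a.support, p ∈ E i₀
        · -- some set contains the whole support: bound by `(flog 2)⁻¹ * N a`
          obtain ⟨i₀, hi₀⟩ := hcase
          refine le_max_of_le_right ?_
          have hsum : ∑ i, N (proj (E i) a) = N a := by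
            rw [Finset.sum_eq_single_of_mem i₀ (Finset.mem_univ _)]
            · rw [proj_eq_self hi₀]
            · intro j _ hj
              have hz : proj (E j) a = 0 := by
                refine proj_eq_zero fun p hp hpj => ?_
                have hpi₀ : p ∈ E i₀ := hi₀ p hp
                rcases hj.lt_or_gt with hlt | hlt
                · exact lt_irrefl p (hE j i₀ hlt p hpj p hpi₀)
                · exact lt_irrefl p (hE i₀ j hlt p hpi₀ p hpj)
              rw [hz, N_zero hN.1]
          rw [hsum]
          have hinv : (flog n)⁻¹ ≤ (flog 2)⁻¹ :=
            inv_anti₀ flog_two_pos (flog_two_le hn)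
          exact mul_le_mul_of_nonneg_right hinv hNa
        · -- all intersections are proper subsets: use the inductive hypothesis
          push_neg at hcase
          refine le_max_of_le_left ?_
          set F : Fin n → Finset ℕ := fun i => (E i).biUnion fun k => (y k).support
            with hFdef
          have hFLt : ∀ i j : Fin n, i < j → FLt (F i) (F j) := by
            intro i j hij p hp q hq
            obtain ⟨ki, hki, hpki⟩ := Finset.mem_biUnion.mp hp
            obtain ⟨kj, hkj, hqkj⟩ := Finset.mem_biUnion.mp hq
            exact block_lt hy (hE i j hij ki hki kj hkj) p hpki q hqkj
          have hterm : ∀ i : Fin n, N (proj (E i) a) ≤ N (proj (F i) Y) := by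
            intro i
            obtain ⟨p, hp, hpE⟩ := hcase i
            have hcard : (proj (E i) a).support.card ≤ k := by
              have hsupp : (proj (E i) a).support = a.support.filter (· ∈ E i) := rfl
              have hss : (proj (E i) a).support ⊂ a.support := by
                rw [hsupp]
                refine Finset.ssubset_iff_of_subset (Finset.filter_subset _ _) |>.mpr ?_
                exact ⟨p, hp, fun hmem => hpE (Finset.mem_filter.mp hmem).2⟩
              have := Finset.card_lt_card hss
              omega
            have hIH := ih (proj (E i) a) hcard
            rwa [hYdef, proj_biUnion_block hy a (E i)]
          calc (flog n)⁻¹ * ∑ i, N (proj (E i) a)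
              ≤ (flog n)⁻¹ * ∑ i, N (proj (F i) Y) := by
                refine mul_le_mul_of_nonneg_left (Finset.sum_le_sum fun i _ => hterm i)
                  (le_of_lt (inv_pos.mpr (flog_n_pos hn)))
            _ ≤ N Y := schSet_le_N hN ⟨n, hn, F, hFLt, rfl⟩
    -- conclude from `key`
    rcases le_max_iff.mp key with h | h
    · exact h
    · -- then `N a ≤ (flog 2)⁻¹ * N a` forces `N a ≤ 0`
      have hlt : (flog 2)⁻¹ < 1 := by
        rw [inv_lt_one_iff₀]
        right
        exact one_lt_flog_two
      nlinarith

end Aux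

/-- every normalized block sequence of `(e_i)` 1-dominates `(e_n)`. -/
theorem normalized_block_dominates_basis
    (N : c00 → ℝ) (hN : IsSchlumprechtNorm N)
    (y : ℕ → c00) (hy : IsBlockSeq y) (hyn : ∀ n, N (y n) = 1)
    (a : ℕ →₀ ℝ) :
    N (a.sum fun i t => t • Finsupp.single i (1 : ℝ)) ≤
      N (a.sum fun i t => t • y i) := by
  have hsingle : (a.sum fun i t => t • Finsupp.single i (1 : ℝ)) = a := by
    have h1 : (a.sum fun i t => t • Finsupp.single i (1 : ℝ))
        = a.sum fun i t => Finsupp.single i t := by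
      refine Finsupp.sum_congr fun i _ => ?_
      rw [Finsupp.smul_single', mul_one]
    rw [h1, Finsupp.sum_single]
  rw [hsingle]
  exact N_le_N_blockSum hN hy hyn a.support.card a le_rfl
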